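/- Let q : ℝ → ℝ be twice differentiable on the interval (0,∞). If q satisfies the first order equation 25·q(z) − 60·z·q'(z) + 27·z^{4/3}·q'(z)² = 0 for all z > 0, then q also satisfies the second order equation 90·z^{4/3}·(3q(z) − 4z^{2/3})·q''(z) − 54·z^{4/3}·q'(z)² + 30·z^{1/3}·(6q(z) − 5z^{2/3})·q'(z) − 25·q(z) = 0 for all z > 0. -/

import Mathlib

/-- If a twice differentiable `q` on `(0,∞)` satisfies the first order ODE
`25q − 60z q' + 27 z^{4/3} q'² = 0`, then it satisfies the second order ODE
`90 z^{4/3}(3q − 4z^{2/3})q'' − 54 z^{4/3} q'² + 30 z^{1/3}(6q − 5z^{2/3})q' − 25q = 0`. -/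
theorem stmt15 (q : ℝ → ℝ)
    (hq : ∀ z : ℝ, 0 < z → DifferentiableAt ℝ q z)
    (hq' : ∀ z : ℝ, 0 < z → DifferentiableAt ℝ (deriv q) z)
    (hode : ∀ z : ℝ, 0 < z →
      25 * q z - 60 * z * deriv q z + 27 * z ^ ((4 : ℝ) / 3) * (deriv q z) ^ 2 = 0) :
    ∀ z : ℝ, 0 < z →
      90 * z ^ ((4 : ℝ) / 3) * (3 * q z - 4 * z ^ ((2 : ℝ) / 3)) * deriv (deriv q) z
        - 54 * z ^ ((4 : ℝ) / 3) * (deriv q z) ^ 2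
        + 30 * z ^ ((1 : ℝ) / 3) * (6 * q z - 5 * z ^ ((2 : ℝ) / 3)) * deriv q z
        - 25 * q z = 0 := by
  intro z hz
  -- derivative of the first-order ODE
  set P := deriv q z with hP
  set W := deriv (deriv q) z with hW
  have hder : HasDerivAt (fun x => 25 * q x - 60 * x * deriv q x
      + 27 * x ^ ((4 : ℝ) / 3) * (deriv q x) ^ 2)
      (25 * P - (60 * deriv q z + 60 * z * W)
        + (27 * ((4:ℝ)/3 * z ^ ((4:ℝ)/3 - 1)) * P ^ 2
          + 27 * z ^ ((4:ℝ)/3) * (2 * P * W))) z := by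
    have h1 : HasDerivAt q P z := (hq z hz).hasDerivAt
    have h2 : HasDerivAt (deriv q) W z := (hq' z hz).hasDerivAt
    have h3 : HasDerivAt (fun x : ℝ => x ^ ((4:ℝ)/3)) ((4:ℝ)/3 * z ^ ((4:ℝ)/3 - 1)) z :=
      Real.hasDerivAt_rpow_const (Or.inl hz.ne')
    have h4 : HasDerivAt (fun x => 60 * x * deriv q x) (60 * deriv q z + 60 * z * W) z := by
      have := ((hasDerivAt_id z).const_mul (60:ℝ)).mul h2
      exact this.congr_deriv (by simp)
    have h5 : HasDerivAt (fun x => 27 * x ^ ((4:ℝ)/3) * (deriv q x) ^ 2)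
        (27 * ((4:ℝ)/3 * z ^ ((4:ℝ)/3 - 1)) * P ^ 2 + 27 * z ^ ((4:ℝ)/3) * (2 * P * W)) z := by
      have := (h3.const_mul (27:ℝ)).mul (h2.pow 2)
      exact this.congr_deriv (by simp only [Pi.pow_apply, Nat.cast_ofNat, Nat.add_one_sub_one, pow_one]; ring)
    exact ((h1.const_mul 25).sub h4).add h5
  have heq : (fun x => 25 * q x - 60 * x * deriv q x
      + 27 * x ^ ((4 : ℝ) / 3) * (deriv q x) ^ 2) =ᶠ[nhds z] (fun _ => (0:ℝ)) := by
    filter_upwards [IsOpen.mem_nhds isOpen_Ioi hz] with x hx using hode x hx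
  have hG : 25 * P - (60 * deriv q z + 60 * z * W)
      + (27 * ((4:ℝ)/3 * z ^ ((4:ℝ)/3 - 1)) * P ^ 2
        + 27 * z ^ ((4:ℝ)/3) * (2 * P * W)) = 0 := by
    have := hder.congr_of_eventuallyEq heq.symm
    simpa using this.deriv.symm
  -- rewrite powers in terms of u = z^{1/3}
  set u := z ^ ((1:ℝ)/3) with hu
  have hu3 : u ^ 3 = z := by
    rw [hu, ← Real.rpow_natCast (z ^ ((1:ℝ)/3)) 3, ← Real.rpow_mul hz.le]
    norm_num
  have h23 : z ^ ((2:ℝ)/3) = u ^ 2 := by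
    rw [hu, ← Real.rpow_natCast (z ^ ((1:ℝ)/3)) 2, ← Real.rpow_mul hz.le]
    norm_num
  have h43 : z ^ ((4:ℝ)/3) = u ^ 4 := by
    rw [hu, ← Real.rpow_natCast (z ^ ((1:ℝ)/3)) 4, ← Real.rpow_mul hz.le]
    norm_num
  have h13 : z ^ ((4:ℝ)/3 - 1) = u := by
    rw [show (4:ℝ)/3 - 1 = 1/3 by norm_num, hu]
  have hF : 25 * q z - 60 * z * P + 27 * z ^ ((4 : ℝ) / 3) * P ^ 2 = 0 := hode z hz
  simp only [h43, h23, h13] at hF hG ⊢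
  linear_combination (54/5 * u^4 * W + 36/5 * u * P - 1) * hF
    + (6 * u^3 - 27/5 * u^4 * P) * hG
    + (-(324 * u^4 * P * W + 432 * u * P^2 - 60 * P + 360 * u^3 * W)) * hu3
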